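/- Let $k$ be a field of characteristic $p > 0$, $q = p^e > 2$, and $R = k[t][x,y]$. Suppose $d \in k[t]$ and $a', c \in R$ satisfy $d(x-y)y^{q-2} - a'x^{q-1} - c(x-y)(x-ty) \in (y^{q-1})$. Then $d \cdot y^{q-2} \in (x - ty, y^{q-1}, \gamma)$ where $\gamma = \sum_{i=0}^{q-2} x^i y^{q-2-i}$, and consequently $\tau = \sum_{i=0}^{q-2} t^i$ divides $d$ in $k[t]$. -/

import Mathlib

open MvPolynomial

/-- In `R = k[t][x,y]`, `q = p^e > 2`: if `d ∈ k[t]` and `a', c ∈ R` satisfy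
`d(x-y)y^(q-2) - a'x^(q-1) - c(x-y)(x-ty) ∈ (y^(q-1))`, then
`d·y^(q-2) ∈ (x - ty, y^(q-1), γ)` with `γ = ∑_{i=0}^{q-2} x^i y^(q-2-i)`, and
consequently `τ = ∑_{i=0}^{q-2} t^i` divides `d` in `k[t]`. -/
theorem stmt_16 (k : Type*) [Field k] (p : ℕ) [Fact p.Prime] [CharP k p]
    (e : ℕ) (he : 1 ≤ e) (q : ℕ) (hq : q = p ^ e) (hq2 : 2 < q)
    (d : Polynomial k) (a' c : MvPolynomial (Fin 2) (Polynomial k))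
    (h : (C d * (X 0 - X 1) * X 1 ^ (q - 2) - a' * X 0 ^ (q - 1) -
        c * (X 0 - X 1) * (X 0 - C Polynomial.X * X 1) :
          MvPolynomial (Fin 2) (Polynomial k)) ∈
      Ideal.span {(X 1 : MvPolynomial (Fin 2) (Polynomial k)) ^ (q - 1)}) :
    (C d * X 1 ^ (q - 2) : MvPolynomial (Fin 2) (Polynomial k)) ∈
        Ideal.span {X 0 - C Polynomial.X * X 1,
          (X 1 : MvPolynomial (Fin 2) (Polynomial k)) ^ (q - 1),
          ∑ i ∈ Finset.range (q - 1), X 0 ^ i * X 1 ^ (q - 2 - i)} ∧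
      (∑ i ∈ Finset.range (q - 1), (Polynomial.X : Polynomial k) ^ i) ∣ d := by
  set γ : MvPolynomial (Fin 2) (Polynomial k) :=
    ∑ i ∈ Finset.range (q - 1), X 0 ^ i * X 1 ^ (q - 2 - i) with hγdef
  have hγ : γ * (X 0 - X 1 : MvPolynomial (Fin 2) (Polynomial k)) =
      X 0 ^ (q - 1) - X 1 ^ (q - 1) := by
    simpa [hγdef, show q - 1 - 1 = q - 2 from by omega] using
      geom_sum₂_mul (X 0 : MvPolynomial (Fin 2) (Polynomial k)) (X 1) (q - 1)
  obtain ⟨u, hu⟩ := Ideal.mem_span_singleton.mp h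
  have hkey : (X 0 - X 1 : MvPolynomial (Fin 2) (Polynomial k)) *
      (C d * X 1 ^ (q - 2) - c * (X 0 - C Polynomial.X * X 1) - a' * γ) =
      X 1 ^ (q - 1) * (u + a') := by
    linear_combination hu - a' * hγ
  have hprime : Prime ((X 0 - X 1 : MvPolynomial (Fin 2) (Polynomial k))) := by
    rw [← MulEquiv.prime_iff (finSuccEquiv (Polynomial k) 1).toMulEquiv]
    have : (finSuccEquiv (Polynomial k) 1) (X 0 - X 1) =
        Polynomial.X - Polynomial.C (X 0) := by
      rw [map_sub, finSuccEquiv_X_zero, show (1 : Fin 2) = (0 : Fin 1).succ from rfl,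
        finSuccEquiv_X_succ]
    erw [this]
    exact Polynomial.prime_X_sub_C _
  have hψ : ¬ (X 0 - X 1 : MvPolynomial (Fin 2) (Polynomial k)) ∣ X 1 ^ (q - 1) := by
    intro hdvd
    have := map_dvd (aeval (fun _ => (X 1 : MvPolynomial (Fin 2) (Polynomial k))) :
      MvPolynomial (Fin 2) (Polynomial k) →ₐ[Polynomial k]
        MvPolynomial (Fin 2) (Polynomial k)) hdvd
    simp only [map_sub, map_pow, aeval_X, sub_self, zero_dvd_iff] at this
    exact pow_ne_zero _ (X_ne_zero _) this
  have hdvd : (X 0 - X 1 : MvPolynomial (Fin 2) (Polynomial k)) ∣ (u + a') := by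
    have hd : (X 0 - X 1 : MvPolynomial (Fin 2) (Polynomial k)) ∣
        X 1 ^ (q - 1) * (u + a') := ⟨_, hkey.symm⟩
    rcases hprime.dvd_mul.mp hd with h1 | h1
    · exact absurd h1 hψ
    · exact h1
  obtain ⟨w, hw⟩ := hdvd
  have hfin : (C d * X 1 ^ (q - 2) : MvPolynomial (Fin 2) (Polynomial k)) =
      c * (X 0 - C Polynomial.X * X 1) + w * X 1 ^ (q - 1) + a' * γ := by
    have hne : (X 0 - X 1 : MvPolynomial (Fin 2) (Polynomial k)) ≠ 0 := hprime.ne_zero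
    apply mul_left_cancel₀ hne
    rw [hw] at hkey
    linear_combination hkey
  constructor
  · rw [hfin]
    refine Ideal.add_mem _ (Ideal.add_mem _ ?_ ?_) ?_
    · exact Ideal.mul_mem_left _ _ (Ideal.subset_span (by simp))
    · exact Ideal.mul_mem_left _ _ (Ideal.subset_span (by simp))
    · exact Ideal.mul_mem_left _ _ (Ideal.subset_span (by simp))
  · -- evaluate x ↦ t·y, y ↦ y into k[t][y]
    set f : Fin 2 → Polynomial (Polynomial k) :=
      ![Polynomial.C Polynomial.X * Polynomial.X, Polynomial.X] with hf
    have hμγ : aeval f γ = Polynomial.C (∑ i ∈ Finset.range (q - 1),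
        (Polynomial.X : Polynomial k) ^ i) * Polynomial.X ^ (q - 2) := by
      rw [hγdef, map_sum]
      have : ∀ i ∈ Finset.range (q - 1),
          aeval f ((X 0 : MvPolynomial (Fin 2) (Polynomial k)) ^ i * X 1 ^ (q - 2 - i)) =
          Polynomial.C ((Polynomial.X : Polynomial k) ^ i) * Polynomial.X ^ (q - 2) := by
        intro i hi
        have hi' : i + (q - 2 - i) = q - 2 := by
          have := Finset.mem_range.mp hi; omega
        rw [map_mul, map_pow, map_pow, aeval_X, aeval_X, hf]
        simp only [Matrix.cons_val_zero, Matrix.cons_val_one, Matrix.head_cons]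
        rw [mul_pow, ← Polynomial.C_pow, mul_assoc, ← pow_add, hi']
      rw [Finset.sum_congr rfl this, ← Finset.sum_mul, ← map_sum]
    have hμγ' := hμγ
    rw [hf] at hμγ'
    have h2 := congrArg (aeval f) hfin
    simp only [map_add, map_mul, map_sub, map_pow, aeval_X, aeval_C, hμγ, hμγ',
      Polynomial.algebraMap_eq, hf, Matrix.cons_val_zero, Matrix.cons_val_one,
      Matrix.head_cons, sub_self, mul_zero, zero_add] at h2
    have hre : (aeval f) a' * (Polynomial.C (∑ i ∈ Finset.range (q - 1),
        (Polynomial.X : Polynomial k) ^ i) * Polynomial.X ^ (q - 2)) =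
        (Polynomial.C (∑ i ∈ Finset.range (q - 1),
          (Polynomial.X : Polynomial k) ^ i) * (aeval f) a') * Polynomial.X ^ (q - 2) := by
      ring
    rw [hre] at h2
    have h3 := congrArg (fun P => Polynomial.coeff P (q - 2)) h2
    simp only [Polynomial.coeff_add, Polynomial.coeff_C_mul,
      Polynomial.coeff_mul_X_pow'] at h3
    rw [Nat.sub_self, if_pos (le_refl _), Polynomial.coeff_C_zero,
      if_neg (show ¬ q - 1 ≤ q - 2 from by omega), if_pos (le_refl (q - 2)),
      zero_add] at h3
    exact ⟨Polynomial.coeff ((aeval f) a') 0, by linear_combination h3⟩
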